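/- Let Π be a rectagraph of valency n ≥ 3 and Γ a connected component of the distance-2 graph Π₂ of Π. Then the restriction map from the setwise stabilizer of VΓ in Aut(Π) to Aut(Γ), sending g to its restriction to VΓ, is an injective group homomorphism. -/

import Mathlib

/-- A rectagraph: a connected triangle-free graph in which every 2-arc lies in a
unique quadrangle. -/
def IsRectagraph {V : Type*} (P : SimpleGraph V) : Prop :=
  P.Connected ∧ P.CliqueFree 3 ∧
    ∀ u v w : V, P.Adj v u → P.Adj v w → u ≠ w →
      ∃! x : V, x ≠ v ∧ P.Adj u x ∧ P.Adj w x

/-- The distance-2 graph of a graph `G`. -/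
def dist2 {V : Type*} (G : SimpleGraph V) : SimpleGraph V where
  Adj u v := G.dist u v = 2
  symm := ⟨fun u v h => by rwa [SimpleGraph.dist_comm]⟩
  loopless := ⟨fun u h => by simp only [SimpleGraph.dist_self] at h; omega⟩

/-- Let `P` be a rectagraph of valency `n ≥ 3` and `Γ` a connected component of
its distance-2 graph, with vertex set `S`. Then restriction to `S` is injective
on the setwise stabiliser of `S` in `Aut(P)` (restriction is clearly a group
homomorphism to `Aut(Γ)`): an automorphism of `P` stabilising `S` setwise and
fixing `S` pointwise is the identity. -/
theorem restriction_to_component_injective {V : Type*} [Finite V] {n : ℕ}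
    (hn : 3 ≤ n) (P : SimpleGraph V) (hP : IsRectagraph P)
    (hreg : ∀ u : V, (P.neighborSet u).ncard = n)
    (c : (dist2 P).ConnectedComponent)
    (g : P ≃g P) (hstab : ∀ x : V, g x ∈ c.supp ↔ x ∈ c.supp)
    (hfix : ∀ x ∈ c.supp, g x = x) :
    ∀ x : V, g x = x := by
  classical
  obtain ⟨hconn, htf, hquad⟩ := hP
  -- two distinct neighbours of a common vertex are at distance 2
  have distA : ∀ v x w : V, P.Adj v x → P.Adj v w → x ≠ w → P.dist x w = 2 := by
    intro v x w hvx hvw hxw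
    have hle : P.dist x w ≤ 2 := by
      have := SimpleGraph.dist_le
        (SimpleGraph.Walk.cons hvx.symm (SimpleGraph.Walk.cons hvw SimpleGraph.Walk.nil))
      simpa using this
    have hne1 : P.dist x w ≠ 1 := by
      intro h1
      have hadj : P.Adj x w := SimpleGraph.dist_eq_one_iff_adj.mp h1
      exact htf {v, x, w} (SimpleGraph.is3Clique_triple_iff.mpr ⟨hvx, hvw, hadj⟩)
    have hne0 : P.dist x w ≠ 0 := fun h0 => hxw (hconn.dist_eq_zero_iff.mp h0)
    omega
  -- membership in supp spreads to all neighbours of a neighbour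
  have spread : ∀ x v u : V, x ∈ c.supp → P.Adj x v → P.Adj v u → u ∈ c.supp := by
    intro x v u hx hxv hvu
    by_cases hxu : x = u
    · exact hxu ▸ hx
    · have hd : (dist2 P).Adj x u := distA v x u hxv.symm hvu hxu
      rw [SimpleGraph.ConnectedComponent.mem_supp_iff] at hx ⊢
      rw [← hx]
      exact (SimpleGraph.ConnectedComponent.sound hd.symm.reachable)
  -- every vertex is in supp or adjacent to a vertex of supp
  obtain ⟨x₀, hx₀⟩ := c.exists_rep
  have hx₀s : x₀ ∈ c.supp := by rwa [SimpleGraph.ConnectedComponent.mem_supp_iff]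
  have cover : ∀ v : V, v ∈ c.supp ∨ ∃ y ∈ c.supp, P.Adj y v := by
    intro v
    obtain ⟨p⟩ := hconn.preconnected v x₀
    induction p with
    | nil => exact Or.inl hx₀s
    | @cons a b _ hab p ih =>
      rcases ih hx₀ hx₀s with hb | ⟨y, hy, hyb⟩
      · exact Or.inr ⟨b, hb, hab.symm⟩
      · exact Or.inl (spread y b a hy hyb hab.symm)
  -- main argument
  intro v
  rcases cover v with hv | ⟨x, hx, hxv⟩
  · exact hfix v hv
  · -- all neighbours of v are in supp
    have hNsupp : ∀ u, P.Adj v u → u ∈ c.supp := fun u hu => spread x v u hx hxv hu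
    by_contra hgv
    -- g v is adjacent to every neighbour of v
    have hgadj : ∀ u, P.Adj v u → P.Adj (g v) u := by
      intro u hu
      have := g.map_adj_iff.mpr hu
      rwa [hfix u (hNsupp u hu)] at this
    -- pick three distinct neighbours of v
    have hfin : (P.neighborSet v).Finite := Set.toFinite _
    have h1 : (P.neighborSet v).ncard ≠ 0 := by rw [hreg v]; omega
    obtain ⟨u₁, hu₁⟩ := Set.nonempty_of_ncard_ne_zero h1
    have h2 : 1 < ((P.neighborSet v) \ {u₁}).ncard := by
      have := Set.ncard_diff_singleton_of_mem hu₁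
      rw [hreg v] at this
      omega
    obtain ⟨u₂, u₃, hu₂, hu₃, hne⟩ :=
      (Set.one_lt_ncard_iff hfin.diff).mp h2
    obtain ⟨hu₂s, hu₂ne⟩ := hu₂
    obtain ⟨hu₃s, hu₃ne⟩ := hu₃
    simp only [Set.mem_singleton_iff] at hu₂ne hu₃ne
    -- the 2-arc v - u₁ - g v lies in at least two quadrangles: contradiction
    obtain ⟨y, _, hy⟩ := hquad v u₁ (g v) hu₁.symm (hgadj u₁ hu₁).symm (Ne.symm hgv)
    have e₂ : u₂ = y := hy u₂ ⟨hu₂ne, hu₂s, hgadj u₂ hu₂s⟩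
    have e₃ : u₃ = y := hy u₃ ⟨hu₃ne, hu₃s, hgadj u₃ hu₃s⟩
    exact hne (e₂.trans e₃.symm)
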